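/- Let X be a real normed space, E ⊆ X, (A_n) a sequence of mappings A_n : E → X, and A : E → X a mapping with ‖Ax − Ay‖ ≤ ‖x − y‖ − ψ(‖x − y‖) for all x, y ∈ E, where ψ : [0,∞) → [0,∞) is nondecreasing, positive on (0,∞), with ψ(0) = 0. Suppose ψ_n, g : [0,∞) → [0,∞) are functions positive on (0,∞), and (k_n), (μ_n), (h_n), (δ_n), (ν_n) are sequences of nonnegative reals such that for all x, y ∈ E and t ∈ [0,∞): ‖A_n x − A_n y‖ ≤ (1 + k_n)‖x − y‖ − ψ_n(‖x − y‖) + μ_n; ‖A_n x − Ax‖ ≤ h_n·g(‖x‖) + δ_n; and |ψ_n(t) − ψ(t)| ≤ ν_n; with μ_n, h_n, δ_n, ν_n → 0 with rates of convergence f₁, f₂, f₃, f₄ respectively. Let (x_n) be a sequence in E with x_{n+1} = A_n x_n for all n, let q ∈ E be a fixpoint of A, and suppose ∑_{n=0}^∞ k_n ≤ d for some d > 0. Let c, c₁ > 0 satisfy ‖x_n − q‖ ≤ c for all n and g(‖q‖) ≤ c₁. Then for every ε > 0 and every n ≥ Φ(ε) := σ((1/(2e^d))·min{ψ(ε/(2e^d)),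 ε}) + ⌈2e^d·∫_{ε/(2e^d)}^{c} dt/ψ(t)⌉ + 1, where σ(δ) := max{f₁(δ/4), f₂(δ/(4c₁)), f₃(δ/4), f₄(δ/4)}, we have ‖x_n − q‖ ≤ ε. -/

import Mathlib

open MeasureTheory

set_option maxHeartbeats 2000000 in
lemma stmt9_core (ψ : ℝ → ℝ) (k a : ℕ → ℝ) (d c ε : ℝ) (N₀ : ℕ)
    (hψmono : ∀ s t : ℝ, 0 ≤ s → s ≤ t → ψ s ≤ ψ t)
    (hψpos : ∀ t : ℝ, 0 < t → 0 < ψ t) (hψ0 : ψ 0 = 0)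
    (hknn : ∀ n, 0 ≤ k n)
    (hd : 0 < d) (hksum : ∀ n, ∑ i ∈ Finset.range (n + 1), k i ≤ d)
    (hab : ∀ n, a n ≤ c) (ha0 : ∀ n, 0 ≤ a n)
    (hε : 0 < ε) (hεc : ε < c)
    (hrec : ∀ m, N₀ ≤ m → a (m + 1) ≤ (1 + k m) * a m - ψ (a m)
      + (1 / (2 * Real.exp d)) * min (ψ (ε / (2 * Real.exp d))) ε)
    (n : ℕ)
    (hn : N₀ + ⌈2 * Real.exp d * ∫ t in (ε / (2 * Real.exp d))..c, 1 / ψ t⌉₊ + 1 ≤ n) :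
    a n ≤ ε := by
  have hD1 : 1 < Real.exp d := Real.one_lt_exp_iff.mpr hd
  set D := Real.exp d with hD
  have hD0 : 0 < D := lt_trans one_pos hD1
  set η := ε / (2 * D) with hη
  have hη0 : 0 < η := by positivity
  have hηε : η < ε := by
    rw [hη, div_lt_iff₀ (by positivity)]; nlinarith
  have hηc : η < c := hηε.trans hεc
  have hψη0 : 0 < ψ η := hψpos η hη0
  set δ := (1 / (2 * D)) * min (ψ η) ε with hδ
  have hδ0 : 0 < δ := by
    apply mul_pos (by positivity) (lt_min hψη0 hε)
  have hδψη : δ ≤ ψ η / (2 * D) := by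
    rw [hδ, div_eq_mul_one_div (ψ η), mul_comm (ψ η)]
    exact mul_le_mul_of_nonneg_left (min_le_left _ _) (by positivity)
  have hδε : δ ≤ ε / (2 * D) := by
    rw [hδ, div_eq_mul_one_div ε, mul_comm ε]
    exact mul_le_mul_of_nonneg_left (min_le_right _ _) (by positivity)
  have hc0 : 0 < c := lt_trans hε hεc
  have hψnonneg : ∀ t : ℝ, 0 ≤ t → 0 ≤ ψ t := by
    intro t ht; rw [← hψ0]; exact hψmono 0 t le_rfl ht
  -- products
  have hfac : ∀ i, (1:ℝ) ≤ 1 + k i := fun i => by linarith [hknn i]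
  have hprod1 : ∀ s t : ℕ, (1:ℝ) ≤ ∏ i ∈ Finset.Ico s t, (1 + k i) := by
    intro s t
    calc (1:ℝ) = ∏ i ∈ Finset.Ico s t, 1 := by rw [Finset.prod_const_one]
      _ ≤ ∏ i ∈ Finset.Ico s t, (1 + k i) :=
          Finset.prod_le_prod (fun i _ => zero_le_one) (fun i _ => hfac i)
  have hprodpos : ∀ s t : ℕ, (0:ℝ) < ∏ i ∈ Finset.Ico s t, (1 + k i) :=
    fun s t => lt_of_lt_of_le one_pos (hprod1 s t)
  have hsum : ∀ t : ℕ, ∑ i ∈ Finset.range t, k i ≤ d := by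
    intro t
    cases t with
    | zero => simpa using hd.le
    | succ m => exact hksum m
  have hprodD : ∀ s t : ℕ, (∏ i ∈ Finset.Ico s t, (1 + k i)) ≤ D := by
    intro s t
    have hstep1 : (∏ i ∈ Finset.Ico s t, (1 + k i)) ≤ ∏ i ∈ Finset.range t, (1 + k i) := by
      rcases le_or_gt t s with hts | hst
      · rw [Finset.Ico_eq_empty (by omega), Finset.prod_empty]
        calc (1:ℝ) = ∏ i ∈ Finset.Ico 0 t, 1 := by rw [Finset.prod_const_one]
          _ ≤ ∏ i ∈ Finset.Ico 0 t, (1 + k i) :=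
              Finset.prod_le_prod (fun i _ => zero_le_one) (fun i _ => hfac i)
          _ = ∏ i ∈ Finset.range t, (1 + k i) := by rw [Finset.range_eq_Ico]
      · have := Finset.prod_Ico_consecutive (fun i => 1 + k i) (Nat.zero_le s) hst.le
        rw [Finset.range_eq_Ico, ← this]
        have h1 : (1:ℝ) ≤ ∏ i ∈ Finset.Ico 0 s, (1 + k i) := hprod1 0 s
        nlinarith [hprodpos s t, hprodpos 0 s]
    calc (∏ i ∈ Finset.Ico s t, (1 + k i))
        ≤ ∏ i ∈ Finset.range t, (1 + k i) := hstep1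
      _ ≤ ∏ i ∈ Finset.range t, Real.exp (k i) := by
          apply Finset.prod_le_prod (fun i _ => by linarith [hfac i]) (fun i _ => by
            linarith [Real.add_one_le_exp (k i)])
      _ = Real.exp (∑ i ∈ Finset.range t, k i) := (Real.exp_sum _ _).symm
      _ ≤ D := Real.exp_le_exp.mpr (hsum t)
  -- integrability facts
  have hint : ∀ s t : ℝ, 0 < s → 0 < t →
      IntervalIntegrable (fun u => 1 / ψ u) volume s t := by
    intro s t hs ht
    apply AntitoneOn.intervalIntegrable
    intro u hu v hv huv
    have hu0 : 0 < u := lt_of_lt_of_le (lt_min hs ht) hu.1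
    exact one_div_le_one_div_of_le (hψpos u hu0) (hψmono u v hu0.le huv)
  have hintnn : ∀ s t : ℝ, 0 < s → s ≤ t → 0 ≤ ∫ u in s..t, 1 / ψ u := by
    intro s t hs hst
    apply intervalIntegral.integral_nonneg hst
    intro u hu
    have : 0 < ψ u := hψpos u (lt_of_lt_of_le hs hu.1)
    positivity

  -- constant lower bound for integrals of 1/ψ
  have hintLB : ∀ s t : ℝ, 0 < s → s ≤ t →
      (t - s) * (1 / ψ t) ≤ ∫ u in s..t, 1 / ψ u := by
    intro s t hs hst
    have ht0 : 0 < t := lt_of_lt_of_le hs hst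
    have h1 : ∫ u in s..t, (1 / ψ t) = (t - s) * (1 / ψ t) := by
      rw [intervalIntegral.integral_const, smul_eq_mul]
    rw [← h1]
    apply intervalIntegral.integral_mono_on hst (intervalIntegrable_const) (hint s t hs ht0)
    intro u hu
    have hu0 : 0 < u := lt_of_lt_of_le hs hu.1
    exact one_div_le_one_div_of_le (hψpos u hu0) (hψmono u t hu0.le hu.2)
  -- nesting of integrals
  have hnest : ∀ s t : ℝ, η ≤ s → s ≤ t → t ≤ c →
      (∫ u in s..t, 1 / ψ u) ≤ ∫ u in η..c, 1 / ψ u := by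
    intro s t hs hst htc
    have hs0 : 0 < s := lt_of_lt_of_le hη0 hs
    have ht0 : 0 < t := lt_of_lt_of_le hs0 hst
    have i1 : IntervalIntegrable (fun u => 1 / ψ u) volume η s := hint _ _ hη0 hs0
    have i2 : IntervalIntegrable (fun u => 1 / ψ u) volume s t := hint _ _ hs0 ht0
    have i3 : IntervalIntegrable (fun u => 1 / ψ u) volume t c := hint _ _ ht0 hc0
    have e1 := intervalIntegral.integral_add_adjacent_intervals i1 i2
    have e2 := intervalIntegral.integral_add_adjacent_intervals (i1.trans i2) i3
    have n1 := hintnn η s hη0 hs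
    have n3 := hintnn t c ht0 htc
    linarith [e1, e2]
  set M := ⌈2 * D * ∫ t in η..c, 1 / ψ t⌉₊ + 1 with hM
  -- Phase 1: find N with a N ≤ (∏ Ico N₀ N) * η
  have exN : ∃ N, N₀ ≤ N ∧ N ≤ N₀ + M ∧
      a N ≤ (∏ i ∈ Finset.Ico N₀ N, (1 + k i)) * η := by
    by_contra hcon
    push_neg at hcon
    set P : ℕ → ℝ := fun j => ∏ i ∈ Finset.Ico N₀ j, (1 + k i) with hPdef
    set b : ℕ → ℝ := fun j => a j / P j with hbdef
    have hPpos : ∀ j, 0 < P j := fun j => hprodpos N₀ j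
    have hP1 : ∀ j, 1 ≤ P j := fun j => hprod1 N₀ j
    have hPD : ∀ j, P j ≤ D := fun j => hprodD N₀ j
    have hble : ∀ j, b j ≤ a j := fun j => div_le_self (ha0 j) (hP1 j)
    have hbgt : ∀ j, N₀ ≤ j → j ≤ N₀ + M → η < b j := by
      intro j h1 h2
      have h3 := hcon j h1 h2
      rw [hbdef]
      rw [lt_div_iff₀ (hPpos j)]
      nlinarith [hPpos j]
    have hstep : ∀ j, N₀ ≤ j → η < a j → b (j + 1) ≤ b j - ψ (a j) / (2 * D) := by
      intro j hj hηa
      have h5 := hrec j hj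
      have haj0 : 0 < a j := lt_trans hη0 hηa
      have hψaj : 0 < ψ (a j) := hψpos _ haj0
      have hψηa : ψ η ≤ ψ (a j) := hψmono η (a j) hη0.le hηa.le
      have hδψa : δ ≤ ψ (a j) / 2 := by
        have h6 : ψ η / (2 * D) ≤ ψ η / 2 :=
          div_le_div_of_nonneg_left hψη0.le two_pos (by linarith)
        have h7 : ψ η / 2 ≤ ψ (a j) / 2 := by linarith
        linarith
      have hPsucc : P (j + 1) = P j * (1 + k j) := Finset.prod_Ico_succ_top hj _
      have hPj1pos : 0 < P (j + 1) := hPpos (j + 1)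
      have hPjne : P j ≠ 0 := ne_of_gt (hPpos j)
      have hkjne : (1 + k j) ≠ 0 := by have := hfac j; intro h; linarith
      have key1 : b (j + 1) ≤ ((1 + k j) * a j - ψ (a j) + δ) / P (j + 1) := by
        show a (j + 1) / P (j + 1) ≤ _
        gcongr
      have key2 : ((1 + k j) * a j - ψ (a j) + δ) / P (j + 1)
          = a j / P j - (ψ (a j) - δ) / P (j + 1) := by
        rw [hPsucc]
        field_simp
        ring
      have hψδnn : 0 ≤ ψ (a j) - δ := by linarith
      have key3 : (ψ (a j) - δ) / D ≤ (ψ (a j) - δ) / P (j + 1) :=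
        div_le_div_of_nonneg_left hψδnn hPj1pos (hPD (j + 1))
      have key4 : ψ (a j) / (2 * D) ≤ (ψ (a j) - δ) / D := by
        rw [div_le_div_iff₀ (by positivity) hD0]
        nlinarith
      have : b j = a j / P j := rfl
      linarith [key1.trans_eq key2]
    -- induction: after m steps the integral accumulated is ≥ m/(2D)
    have hmain : ∀ m, m ≤ M → b (N₀ + m) ≤ b N₀ ∧
        (m : ℝ) / (2 * D) ≤ ∫ t in (b (N₀ + m))..(b N₀), 1 / ψ t := by
      intro m
      induction m with
      | zero =>
        intro _
        refine ⟨le_rfl, ?_⟩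
        simp [intervalIntegral.integral_same]
      | succ m ih =>
        intro hm1
        obtain ⟨ih1, ih2⟩ := ih (by omega)
        set j := N₀ + m with hj
        have hjl : N₀ ≤ j := Nat.le_add_right _ _
        have hju : j ≤ N₀ + M := by omega
        have hju1 : j + 1 ≤ N₀ + M := by omega
        have hbj : η < b j := hbgt j hjl hju
        have hbj1 : η < b (j + 1) := hbgt (j + 1) (by omega) hju1
        have hbN : η < b N₀ := hbgt N₀ le_rfl (by omega)
        have haj : η < a j := lt_of_lt_of_le hbj (hble j)
        have hs := hstep j hjl haj
        have hψaj : 0 < ψ (a j) := hψpos _ (lt_trans hη0 haj)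
        have hbord : b (j + 1) ≤ b j := by
          have : 0 < ψ (a j) / (2 * D) := by positivity
          linarith
        have i1 : IntervalIntegrable (fun u => 1 / ψ u) volume (b (j + 1)) (b j) :=
          hint _ _ (lt_trans hη0 hbj1) (lt_trans hη0 hbj)
        have i2 : IntervalIntegrable (fun u => 1 / ψ u) volume (b j) (b N₀) :=
          hint _ _ (lt_trans hη0 hbj) (lt_trans hη0 hbN)
        have iadd := intervalIntegral.integral_add_adjacent_intervals i1 i2
        have ib : (b j - b (j + 1)) * (1 / ψ (b j)) ≤ ∫ u in (b (j+1))..(b j), 1 / ψ u :=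
          hintLB _ _ (lt_trans hη0 hbj1) hbord
        have hbj0 : 0 < b j := lt_trans hη0 hbj
        have hψbj : 0 < ψ (b j) := hψpos _ hbj0
        have hψle : ψ (b j) ≤ ψ (a j) := hψmono _ _ hbj0.le (hble j)
        have hlow : 1 / (2 * D) ≤ (b j - b (j + 1)) * (1 / ψ (b j)) := by
          rw [mul_one_div, le_div_iff₀ hψbj]
          have h6 : ψ (b j) / (2 * D) ≤ ψ (a j) / (2 * D) :=
            div_le_div_of_nonneg_right hψle (by positivity)
          have h7 : 1 / (2 * D) * ψ (b j) = ψ (b j) / (2 * D) := by ring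
          linarith [hs, h6, h7.le]
        constructor
        · exact le_trans hbord ih1
        · show ((m + 1 : ℕ) : ℝ) / (2 * D) ≤ ∫ t in (b (j + 1))..(b N₀), 1 / ψ t
          have heq : ((m : ℝ) + 1) / (2 * D) = (m : ℝ) / (2 * D) + 1 / (2 * D) := by ring
          push_cast
          rw [heq]
          linarith
    obtain ⟨hord, hint2⟩ := hmain M le_rfl
    have hbMgt : η < b (N₀ + M) := hbgt _ (by omega) le_rfl
    have hbN0c : b N₀ ≤ c := le_trans (hble N₀) (hab N₀)
    have hnest2 : (∫ t in (b (N₀ + M))..(b N₀), 1 / ψ t) ≤ ∫ u in η..c, 1 / ψ u :=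
      hnest _ _ hbMgt.le hord hbN0c
    have hceil : 2 * D * ∫ t in η..c, 1 / ψ t ≤ (⌈2 * D * ∫ t in η..c, 1 / ψ t⌉₊ : ℝ) :=
      Nat.le_ceil _
    have hMcast : (M : ℝ) = (⌈2 * D * ∫ t in η..c, 1 / ψ t⌉₊ : ℝ) + 1 := by
      rw [hM]; push_cast; ring
    have hfin : (M : ℝ) / (2 * D) ≤ ∫ u in η..c, 1 / ψ u := le_trans hint2 hnest2
    rw [div_le_iff₀ (by positivity)] at hfin
    linarith
  -- Phase 2: the invariant
  obtain ⟨N, hN1, hN2, hN3⟩ := exN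
  have hnN : N ≤ n := by
    have h := hn
    rw [Nat.add_assoc, ← hM] at h
    exact le_trans hN2 h
  set PN := ∏ i ∈ Finset.Ico N₀ N, (1 + k i) with hPN
  have hPN1 : 1 ≤ PN := hprod1 N₀ N
  have inv : ∀ m, N ≤ m →
      a m ≤ (∏ i ∈ Finset.Ico N m, (1 + k i)) * (PN * η + δ) := by
    intro m hm
    induction m, hm using Nat.le_induction with
    | base =>
      rw [Finset.Ico_self, Finset.prod_empty, one_mul]
      linarith
    | succ m hm ih =>
      have hrecm := hrec m (le_trans hN1 hm)
      rw [Finset.prod_Ico_succ_top hm]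
      set R := ∏ i ∈ Finset.Ico N m, (1 + k i) with hR
      have hR1 : 1 ≤ R := hprod1 N m
      have hkm := hknn m
      have hkm0 : (0:ℝ) < 1 + k m := by linarith
      rcases le_or_gt (a m) η with hcase | hcase
      · have hψnn : 0 ≤ ψ (a m) := hψnonneg _ (ha0 m)
        have s1 : (1:ℝ) * η ≤ PN * η := mul_le_mul_of_nonneg_right hPN1 hη0.le
        have s2 : (1 + k m) * (η + δ) ≤ (1 + k m) * (PN * η + δ) :=
          mul_le_mul_of_nonneg_left (by linarith) hkm0.le
        have hpd0 : (0:ℝ) ≤ (1 + k m) * (PN * η + δ) := by positivity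
        have s3 : (1 + k m) * (PN * η + δ) ≤ R * ((1 + k m) * (PN * η + δ)) :=
          le_mul_of_one_le_left hpd0 hR1
        have s4 : (1 + k m) * (a m) ≤ (1 + k m) * η :=
          mul_le_mul_of_nonneg_left hcase hkm0.le
        have s5 : δ ≤ (1 + k m) * δ := le_mul_of_one_le_left hδ0.le (by linarith)
        linarith
      · have hψηa : ψ η ≤ ψ (a m) := hψmono η (a m) hη0.le hcase.le
        have hδa : δ ≤ ψ (a m) := by
          have h10 : ψ η * 1 ≤ ψ η * (2 * D) :=
            mul_le_mul_of_nonneg_left (by linarith) hψη0.le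
          have h11 : ψ η / (2 * D) ≤ ψ η := by
            rw [div_le_iff₀ (by positivity)]
            linarith
          linarith
        have h8 : (1 + k m) * a m ≤ (1 + k m) * (R * (PN * η + δ)) :=
          mul_le_mul_of_nonneg_left ih hkm0.le
        linarith
  have hinv := inv n hnN
  have hconsec : (∏ i ∈ Finset.Ico N₀ N, (1 + k i)) * (∏ i ∈ Finset.Ico N n, (1 + k i))
      = ∏ i ∈ Finset.Ico N₀ n, (1 + k i) :=
    Finset.prod_Ico_consecutive _ hN1 hnN
  have hRn1 : 1 ≤ ∏ i ∈ Finset.Ico N n, (1 + k i) := hprod1 N n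
  have hRnD : (∏ i ∈ Finset.Ico N n, (1 + k i)) ≤ D := hprodD N n
  have hfullD : (∏ i ∈ Finset.Ico N₀ n, (1 + k i)) ≤ D := hprodD N₀ n
  have hDη : D * η = ε / 2 := by
    rw [hη]; field_simp
  have hDδ : D * δ ≤ ε / 2 := by
    have : D * δ ≤ D * (ε / (2 * D)) := mul_le_mul_of_nonneg_left hδε hD0.le
    have h9 : D * (ε / (2 * D)) = ε / 2 := by field_simp
    linarith
  have hexp : (∏ i ∈ Finset.Ico N n, (1 + k i)) * (PN * η + δ)
      = (∏ i ∈ Finset.Ico N₀ n, (1 + k i)) * η + (∏ i ∈ Finset.Ico N n, (1 + k i)) * δ := by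
    rw [← hconsec, hPN]; ring
  rw [hexp] at hinv
  have t1 : (∏ i ∈ Finset.Ico N₀ n, (1 + k i)) * η ≤ D * η :=
    mul_le_mul_of_nonneg_right hfullD hη0.le
  have t2 : (∏ i ∈ Finset.Ico N n, (1 + k i)) * δ ≤ D * δ :=
    mul_le_mul_of_nonneg_right hRnD hδ0.le
  linarith


/-- Convergence with rate of the Picard scheme x_{n+1} = A_n x_n for a
sequence (A_n) of approximate weakly contractive mappings approximating a ψ-weakly
contractive mapping A with fixpoint q (quantitative version of Alber–Guerre-Delabriere). -/
theorem stmt_9 {X : Type*} [NormedAddCommGroup X] [NormedSpace ℝ X]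
    (E : Set X) (A : ℕ → X → X) (A0 : X → X) (ψ : ℝ → ℝ) (ψn : ℕ → ℝ → ℝ) (g : ℝ → ℝ)
    (k mu hs ds nu : ℕ → ℝ) (f₁ f₂ f₃ f₄ : ℝ → ℕ) (d c c₁ : ℝ) (q : X) (x : ℕ → X)
    (hψmono : ∀ s t : ℝ, 0 ≤ s → s ≤ t → ψ s ≤ ψ t)
    (hψpos : ∀ t : ℝ, 0 < t → 0 < ψ t) (hψ0 : ψ 0 = 0)
    (hψnpos : ∀ n, ∀ t : ℝ, 0 < t → 0 < ψn n t)
    (hgpos : ∀ t : ℝ, 0 < t → 0 < g t)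
    (hA0 : ∀ y ∈ E, ∀ z ∈ E, ‖A0 y - A0 z‖ ≤ ‖y - z‖ - ψ ‖y - z‖)
    (hknn : ∀ n, 0 ≤ k n) (hmunn : ∀ n, 0 ≤ mu n) (hhsnn : ∀ n, 0 ≤ hs n)
    (hdsnn : ∀ n, 0 ≤ ds n) (hnunn : ∀ n, 0 ≤ nu n)
    (h1 : ∀ n, ∀ y ∈ E, ∀ z ∈ E,
      ‖A n y - A n z‖ ≤ (1 + k n) * ‖y - z‖ - ψn n ‖y - z‖ + mu n)
    (h2 : ∀ n, ∀ y ∈ E, ‖A n y - A0 y‖ ≤ hs n * g ‖y‖ + ds n)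
    (h3 : ∀ n, ∀ t : ℝ, 0 ≤ t → |ψn n t - ψ t| ≤ nu n)
    (hf₁ : ∀ ε : ℝ, 0 < ε → ∀ n, f₁ ε ≤ n → mu n ≤ ε)
    (hf₂ : ∀ ε : ℝ, 0 < ε → ∀ n, f₂ ε ≤ n → hs n ≤ ε)
    (hf₃ : ∀ ε : ℝ, 0 < ε → ∀ n, f₃ ε ≤ n → ds n ≤ ε)
    (hf₄ : ∀ ε : ℝ, 0 < ε → ∀ n, f₄ ε ≤ n → nu n ≤ ε)
    (hxE : ∀ n, x n ∈ E) (hiter : ∀ n, x (n + 1) = A n (x n))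
    (hqE : q ∈ E) (hfix : A0 q = q)
    (hd : 0 < d) (hksum : ∀ n, ∑ i ∈ Finset.range (n + 1), k i ≤ d)
    (hc : 0 < c) (hcb : ∀ n, ‖x n - q‖ ≤ c)
    (hc₁ : 0 < c₁) (hgq : g ‖q‖ ≤ c₁)
    (ε : ℝ) (hε : 0 < ε) (n : ℕ)
    (hn : max (max (f₁ ((1 / (2 * Real.exp d)) * min (ψ (ε / (2 * Real.exp d))) ε / 4))
              (f₂ ((1 / (2 * Real.exp d)) * min (ψ (ε / (2 * Real.exp d))) ε / (4 * c₁))))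
          (max (f₃ ((1 / (2 * Real.exp d)) * min (ψ (ε / (2 * Real.exp d))) ε / 4))
              (f₄ ((1 / (2 * Real.exp d)) * min (ψ (ε / (2 * Real.exp d))) ε / 4)))
        + ⌈2 * Real.exp d * ∫ t in (ε / (2 * Real.exp d))..c, 1 / ψ t⌉₊ + 1 ≤ n) :
    ‖x n - q‖ ≤ ε := by
  rcases le_or_gt c ε with hce | hεc
  · exact le_trans (hcb n) hce
  set D := Real.exp d with hD
  have hD1 : 1 < D := Real.one_lt_exp_iff.mpr hd
  have hD0 : 0 < D := lt_trans one_pos hD1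
  set η := ε / (2 * D) with hη
  have hη0 : 0 < η := by positivity
  have hψη0 : 0 < ψ η := hψpos η hη0
  set δ := (1 / (2 * D)) * min (ψ η) ε with hδ
  have hδ0 : 0 < δ := mul_pos (by positivity) (lt_min hψη0 hε)
  set N₀ := max (max (f₁ (δ / 4)) (f₂ (δ / (4 * c₁)))) (max (f₃ (δ / 4)) (f₄ (δ / 4))) with hN₀
  have hrec : ∀ m, N₀ ≤ m → ‖x (m + 1) - q‖ ≤ (1 + k m) * ‖x m - q‖ - ψ ‖x m - q‖ + δ := by
    intro m hm
    have hm1 : f₁ (δ / 4) ≤ m := le_trans (le_trans (le_max_left _ _) (le_max_left _ _)) hm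
    have hm2 : f₂ (δ / (4 * c₁)) ≤ m := le_trans (le_trans (le_max_right _ _) (le_max_left _ _)) hm
    have hm3 : f₃ (δ / 4) ≤ m := le_trans (le_trans (le_max_left _ _) (le_max_right _ _)) hm
    have hm4 : f₄ (δ / 4) ≤ m := le_trans (le_trans (le_max_right _ _) (le_max_right _ _)) hm
    have hmu : mu m ≤ δ / 4 := hf₁ _ (by positivity) m hm1
    have hhs : hs m ≤ δ / (4 * c₁) := hf₂ _ (by positivity) m hm2
    have hds : ds m ≤ δ / 4 := hf₃ _ (by positivity) m hm3
    have hnu : nu m ≤ δ / 4 := hf₄ _ (by positivity) m hm4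
    have e1 : x (m + 1) - q = (A m (x m) - A m q) + (A m q - A0 q) := by
      rw [hiter m, hfix]; abel
    have t1 : ‖A m (x m) - A m q‖ ≤ (1 + k m) * ‖x m - q‖ - ψn m ‖x m - q‖ + mu m :=
      h1 m (x m) (hxE m) q hqE
    have t2 : ‖A m q - A0 q‖ ≤ hs m * g ‖q‖ + ds m := h2 m q hqE
    have t3 : ψ ‖x m - q‖ - ψn m ‖x m - q‖ ≤ nu m := by
      have := h3 m ‖x m - q‖ (norm_nonneg _)
      have h4 := abs_le.mp this
      linarith [h4.1]
    have t4 : hs m * g ‖q‖ ≤ δ / (4 * c₁) * c₁ := by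
      have h5 : hs m * g ‖q‖ ≤ hs m * c₁ := mul_le_mul_of_nonneg_left hgq (hhsnn m)
      have h6 : hs m * c₁ ≤ δ / (4 * c₁) * c₁ := mul_le_mul_of_nonneg_right hhs hc₁.le
      linarith
    have t5 : δ / (4 * c₁) * c₁ = δ / 4 := by field_simp
    have tri : ‖x (m + 1) - q‖ ≤ ‖A m (x m) - A m q‖ + ‖A m q - A0 q‖ := by
      rw [e1]; exact norm_add_le _ _
    have hδ4 : δ / 4 + δ / 4 + δ / 4 + δ / 4 = δ := by ring
    linarith
  have hεc' : ε < c := hεc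
  exact stmt9_core ψ k (fun m => ‖x m - q‖) d c ε N₀ hψmono hψpos hψ0 hknn hd hksum
    hcb (fun m => norm_nonneg _) hε hεc' hrec n hn
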